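/- For square complex matrices A and B of order n, ‖A + B‖_* = ‖A‖_* + ‖B‖_* if and only if there exists a unitary (orthogonal in the real case) matrix P such that both PA and PB are positive semidefinite. -/

import Mathlib

open Matrix BigOperators
open scoped ComplexOrder
open Polynomial

variable {n : ℕ}

/-- charpoly is invariant under conjugation by an invertible pair. -/
lemma charpoly_conj_aux (P A Q : Matrix (Fin n) (Fin n) ℂ)
    (hPQ : P * Q = 1) (hQP : Q * P = 1) :
    (P * A * Q).charpoly = A.charpoly := by
  unfold Matrix.charpoly
  have key : charmatrix (P * A * Q) =
      (P.map C) * charmatrix A * (Q.map C) := by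
    unfold charmatrix
    rw [Matrix.mul_sub, Matrix.sub_mul]
    congr 1
    · have h1 : (Matrix.scalar (Fin n)) (X : ℂ[X]) = (X : ℂ[X]) • (1 : Matrix (Fin n) (Fin n) ℂ[X]) := by
        simp [Matrix.scalar_apply, Matrix.smul_one_eq_diagonal]
      rw [h1, Matrix.mul_smul, Matrix.smul_mul, Matrix.mul_one]
      have : (P.map C) * (Q.map C) = 1 := by
        rw [← Matrix.map_mul, hPQ, Matrix.map_one C (map_zero C) (map_one C)]
      rw [this]
    · show C.mapMatrix (P * A * Q) = _
      rw [_root_.map_mul, _root_.map_mul]; rfl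
  rw [key, Matrix.det_mul, Matrix.det_mul]
  have : (P.map C).det * (Q.map C).det = 1 := by
    rw [← Matrix.det_mul, ← Matrix.map_mul, hPQ, Matrix.map_one C (map_zero C) (map_one C),
      Matrix.det_one]
  rw [mul_comm ((P.map C).det) A.charmatrix.det, mul_assoc, this, mul_one]

lemma charpoly_diagonal_eq (d : Fin n → ℂ) :
    (Matrix.diagonal d).charpoly = ∏ i, (X - C (d i)) := by
  unfold Matrix.charpoly
  have : charmatrix (Matrix.diagonal d) = Matrix.diagonal (fun i => (X : ℂ[X]) - C (d i)) := by
    ext i j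
    by_cases h : i = j
    · subst h; simp [charmatrix_apply_eq]
    · simp [charmatrix_apply_ne _ _ _ h, Matrix.diagonal_apply_ne _ h]
  rw [this, Matrix.det_diagonal]

lemma roots_prod_X_sub_C' {ι : Type*} [Fintype ι] (e : ι → ℂ) :
    (∏ i, (X - C (e i))).roots = Finset.univ.val.map e := by
  have := Polynomial.roots_multiset_prod_X_sub_C (Finset.univ.val.map e)
  rwa [Multiset.map_map] at this

lemma charpoly_eq_prod {A : Matrix (Fin n) (Fin n) ℂ} (hA : A.IsHermitian) :
    A.charpoly = ∏ i, (X - C ((hA.eigenvalues i : ℝ) : ℂ)) := by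
  conv_lhs => rw [hA.spectral_theorem]
  rw [Unitary.conjStarAlgAut_apply, charpoly_conj_aux _ _ _ ((Matrix.mem_unitaryGroup_iff).mp (hA.eigenvectorUnitary).2)
    ((Matrix.mem_unitaryGroup_iff').mp (hA.eigenvectorUnitary).2)]
  rw [charpoly_diagonal_eq]
  rfl

/-- If a Hermitian matrix's charpoly is `∏ (X - eᵢ)`, then any symmetric function of its
eigenvalues equals that of `e`. -/
lemma sum_fn_eigenvalues {A : Matrix (Fin n) (Fin n) ℂ} (hA : A.IsHermitian)
    (e : Fin n → ℝ) (he : A.charpoly = ∏ i, (X - C (e i : ℂ))) (f : ℝ → ℝ) :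
    ∑ i, f (hA.eigenvalues i) = ∑ i, f (e i) := by
  have hsp := charpoly_eq_prod hA
  have hroots : Finset.univ.val.map (fun i => ((hA.eigenvalues i : ℝ) : ℂ))
      = Finset.univ.val.map (fun i => ((e i : ℝ) : ℂ)) := by
    rw [← roots_prod_X_sub_C' (fun i => ((hA.eigenvalues i : ℝ) : ℂ)),
      ← roots_prod_X_sub_C' (fun i => ((e i : ℝ) : ℂ)), ← hsp, ← he]
  have hreal : Finset.univ.val.map hA.eigenvalues = Finset.univ.val.map e := by
    have : Multiset.map (fun x : ℝ => (x : ℂ)) (Finset.univ.val.map hA.eigenvalues)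
        = Multiset.map (fun x : ℝ => (x : ℂ)) (Finset.univ.val.map e) := by
      rw [Multiset.map_map, Multiset.map_map]; exact hroots
    exact Multiset.map_injective (fun a b => Complex.ofReal_inj.mp) this
  calc ∑ i, f (hA.eigenvalues i) = ((Finset.univ.val.map hA.eigenvalues).map f).sum := by
        rw [Multiset.map_map]; rfl
    _ = ((Finset.univ.val.map e).map f).sum := by rw [hreal]
    _ = ∑ i, f (e i) := by rw [Multiset.map_map]; rfl

/-- Trace norm of a complex matrix: sum of singular values
(square roots of eigenvalues of `M * Mᴴ`). -/
noncomputable def traceNorm {n : ℕ} (M : Matrix (Fin n) (Fin n) ℂ) : ℝ :=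
  ∑ i, Real.sqrt ((Matrix.isHermitian_mul_conjTranspose_self M).eigenvalues i)

lemma traceNorm_unitary_mul {U M : Matrix (Fin n) (Fin n) ℂ}
    (hU : U ∈ Matrix.unitaryGroup (Fin n) ℂ) : traceNorm (U * M) = traceNorm M := by
  unfold traceNorm
  apply sum_fn_eigenvalues
  have hA : (U * M) * (U * M)ᴴ = U * (M * Mᴴ) * Uᴴ := by
    rw [conjTranspose_mul]; simp only [Matrix.mul_assoc]
  rw [hA, charpoly_conj_aux _ _ _
    (by simpa [Matrix.star_eq_conjTranspose] using (Matrix.mem_unitaryGroup_iff).mp hU)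
    (by simpa [Matrix.star_eq_conjTranspose] using (Matrix.mem_unitaryGroup_iff').mp hU)]
  exact charpoly_eq_prod _

lemma traceNorm_posSemidef {M : Matrix (Fin n) (Fin n) ℂ} (hM : M.PosSemidef) :
    traceNorm M = (M.trace).re := by
  set d := hM.1.eigenvalues with hd
  have hdnn : ∀ i, 0 ≤ d i := hM.eigenvalues_nonneg
  set U : Matrix (Fin n) (Fin n) ℂ := (hM.1.eigenvectorUnitary : Matrix (Fin n) (Fin n) ℂ) with hUdef
  have hU : U ∈ Matrix.unitaryGroup (Fin n) ℂ := (hM.1.eigenvectorUnitary).2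
  have hsp : M = U * Matrix.diagonal (fun i => (d i : ℂ)) * Uᴴ := hM.1.spectral_theorem
  have htr : M.trace = ∑ i, (d i : ℂ) := by
    conv_lhs => rw [hsp]
    rw [Matrix.trace_mul_cycle, ← Matrix.star_eq_conjTranspose,
      (Matrix.mem_unitaryGroup_iff').mp hU, one_mul, Matrix.trace_diagonal]
  set D : Matrix (Fin n) (Fin n) ℂ := Matrix.diagonal (fun i => (d i : ℂ)) with hD
  have hUU : Uᴴ * U = 1 := by
    simpa [Matrix.star_eq_conjTranspose] using (Matrix.mem_unitaryGroup_iff').mp hU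
  have hMM : M * Mᴴ = U * Matrix.diagonal (fun i => ((d i ^ 2 : ℝ) : ℂ)) * Uᴴ := by
    rw [hM.1]
    conv_lhs => rw [hsp]
    calc (U * D * Uᴴ) * (U * D * Uᴴ) = U * (D * ((Uᴴ * U) * (D * Uᴴ))) := by
          simp only [Matrix.mul_assoc]
      _ = U * (D * D) * Uᴴ := by rw [hUU, Matrix.one_mul]; simp only [Matrix.mul_assoc]
      _ = U * Matrix.diagonal (fun i => ((d i ^ 2 : ℝ) : ℂ)) * Uᴴ := by
          rw [Matrix.diagonal_mul_diagonal]
          congr 2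
          funext i
          push_cast
          ring
  unfold traceNorm
  have hsum := sum_fn_eigenvalues (Matrix.isHermitian_mul_conjTranspose_self M)
    (fun i => d i ^ 2) ?he Real.sqrt
  case he =>
    rw [hMM, charpoly_conj_aux _ _ _
      (by simpa [Matrix.star_eq_conjTranspose] using (Matrix.mem_unitaryGroup_iff).mp hU)
      hUU, charpoly_diagonal_eq]
  rw [hsum, htr]
  rw [Complex.re_sum]
  simp only [Complex.ofReal_re]
  exact Finset.sum_congr rfl fun i _ => Real.sqrt_sq (hdnn i)

lemma re_trace_unitary_mul_psd {V H : Matrix (Fin n) (Fin n) ℂ}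
    (hV : V ∈ Matrix.unitaryGroup (Fin n) ℂ) (hH : H.PosSemidef) :
    ((V * H).trace).re ≤ (H.trace).re ∧
      (((V * H).trace).re = (H.trace).re → V * H = H) := by
  classical
  open scoped MatrixOrder in set S := CFC.sqrt H with hSdef
  have hS : S.PosSemidef := by open scoped MatrixOrder in exact (CFC.sqrt_nonneg H).posSemidef
  have hSS : S * S = H := by open scoped MatrixOrder in exact CFC.sqrt_mul_sqrt_self H hH.nonneg
  have hSh : Sᴴ = S := hS.1
  have hVV : Vᴴ * V = 1 := by
    simpa [Matrix.star_eq_conjTranspose] using (Matrix.mem_unitaryGroup_iff').mp hV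
  have htr : (V * H).trace = (S * (V * S)).trace := by
    rw [← hSS, ← Matrix.mul_assoc, Matrix.trace_mul_comm]
  -- columns as Euclidean vectors
  set x : Fin n → EuclideanSpace ℂ (Fin n) := fun i => WithLp.toLp 2 (fun j => S j i) with hx
  set y : Fin n → EuclideanSpace ℂ (Fin n) := fun i => WithLp.toLp 2 (fun j => (V * S) j i) with hy
  have hinner_xy : ∀ i, (inner ℂ (x i) (y i) : ℂ) = (S * (V * S)) i i := by
    intro i
    rw [PiLp.inner_apply]
    simp only [RCLike.inner_apply']
    rw [Matrix.mul_apply]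
    apply Finset.sum_congr rfl
    intro j _
    have : S i j = star (S j i) := by rw [← Matrix.conjTranspose_apply, hSh]
    rw [this]; rfl
  have hxx : ∀ i, (inner ℂ (x i) (x i) : ℂ) = H i i := by
    intro i
    rw [PiLp.inner_apply]
    simp only [RCLike.inner_apply']
    rw [← hSS, Matrix.mul_apply]
    apply Finset.sum_congr rfl
    intro j _
    have : S i j = star (S j i) := by rw [← Matrix.conjTranspose_apply, hSh]
    rw [this]; rfl
  have hyy : ∀ i, (inner ℂ (y i) (y i) : ℂ) = H i i := by
    intro i
    rw [PiLp.inner_apply]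
    simp only [RCLike.inner_apply']
    have hmat : (V * S)ᴴ * (V * S) = H := by
      rw [conjTranspose_mul, Matrix.mul_assoc, ← Matrix.mul_assoc Vᴴ, hVV, Matrix.one_mul,
        hSh, hSS]
    conv_rhs => rw [← hmat]
    rw [Matrix.mul_apply]
    apply Finset.sum_congr rfl
    intro j _
    rw [Matrix.conjTranspose_apply]
    rfl
  have hnormx : ∀ i, ‖x i‖ ^ 2 = (H i i).re := by
    intro i
    have h := inner_self_eq_norm_sq (𝕜 := ℂ) (x i)
    rw [hxx i] at h
    exact h.symm
  have hnormy : ∀ i, ‖y i‖ ^ 2 = (H i i).re := by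
    intro i
    have h := inner_self_eq_norm_sq (𝕜 := ℂ) (y i)
    rw [hyy i] at h
    exact h.symm
  have hnorm_eq : ∀ i, ‖y i‖ = ‖x i‖ := by
    intro i
    have := (hnormx i).trans (hnormy i).symm
    nlinarith [norm_nonneg (x i), norm_nonneg (y i)]
  have hterm : ∀ i, ((S * (V * S)) i i).re ≤ (H i i).re := by
    intro i
    rw [← hinner_xy i]
    calc (RCLike.re (inner ℂ (x i) (y i) : ℂ)) ≤ ‖(inner ℂ (x i) (y i) : ℂ)‖ :=
          RCLike.re_le_norm _
      _ ≤ ‖x i‖ * ‖y i‖ := norm_inner_le_norm _ _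
      _ = (H i i).re := by rw [hnorm_eq i, ← pow_two, hnormx i]
  have hsum_le : ((V * H).trace).re ≤ (H.trace).re := by
    rw [htr]
    unfold Matrix.trace Matrix.diag
    rw [Complex.re_sum, Complex.re_sum]
    exact Finset.sum_le_sum fun i _ => hterm i
  refine ⟨hsum_le, fun heq => ?_⟩
  have hall : ∀ i : Fin n, ((S * (V * S)) i i).re = (H i i).re := by
    rw [htr] at heq
    unfold Matrix.trace Matrix.diag at heq
    rw [Complex.re_sum, Complex.re_sum] at heq
    have := (Finset.sum_eq_sum_iff_of_le (fun i (_ : i ∈ Finset.univ) => hterm i)).mp heq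
    exact fun i => this i (Finset.mem_univ i)
  have hcol : ∀ i, x i = y i := by
    intro i
    have h1 : (RCLike.re (inner ℂ (x i) (y i) : ℂ)) = ‖x i‖ * ‖y i‖ := by
      have hle1 : (RCLike.re (inner ℂ (x i) (y i) : ℂ)) ≤ ‖(inner ℂ (x i) (y i) : ℂ)‖ :=
        RCLike.re_le_norm _
      have hle2 : ‖(inner ℂ (x i) (y i) : ℂ)‖ ≤ ‖x i‖ * ‖y i‖ := norm_inner_le_norm _ _
      have heqi : RCLike.re (inner ℂ (x i) (y i) : ℂ) = (H i i).re := by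
        have h0 := hall i
        rw [← hinner_xy i] at h0
        exact h0
      have : ‖x i‖ * ‖y i‖ = (H i i).re := by rw [hnorm_eq i, ← pow_two, hnormx i]
      linarith
    have hzero : ‖x i - y i‖ ^ 2 = 0 := by
      rw [@norm_sub_sq ℂ, h1, hnorm_eq i]
      ring
    have := pow_eq_zero_iff (n := 2) (by norm_num) |>.mp hzero
    exact sub_eq_zero.mp (norm_eq_zero.mp this)
  have hVS : V * S = S := by
    ext j i
    exact (congrArg (fun w => w j) (hcol i)).symm
  rw [← hSS, ← Matrix.mul_assoc, hVS]

lemma exists_unitary_mul_posSemidef (M : Matrix (Fin n) (Fin n) ℂ) :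
    ∃ P ∈ Matrix.unitaryGroup (Fin n) ℂ, (P * M).PosSemidef := by
  classical
  have hH : (Mᴴ * M).IsHermitian := Matrix.isHermitian_conjTranspose_mul_self M
  set d := hH.eigenvalues with hddef
  have hd : ∀ i, 0 ≤ d i := fun i => (Matrix.posSemidef_conjTranspose_mul_self M).eigenvalues_nonneg i
  set W : Matrix (Fin n) (Fin n) ℂ := (hH.eigenvectorUnitary : Matrix (Fin n) (Fin n) ℂ) with hWdef
  have hWmem : W ∈ Matrix.unitaryGroup (Fin n) ℂ := (hH.eigenvectorUnitary).2
  have hWW : Wᴴ * W = 1 := by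
    simpa [Matrix.star_eq_conjTranspose] using (Matrix.mem_unitaryGroup_iff').mp hWmem
  have hWW' : W * Wᴴ = 1 := by
    simpa [Matrix.star_eq_conjTranspose] using (Matrix.mem_unitaryGroup_iff).mp hWmem
  have hdiag : Wᴴ * (Mᴴ * M) * W = Matrix.diagonal (fun i => (d i : ℂ)) :=
    by
      have h := hH.conjStarAlgAut_star_eigenvectorUnitary
      rw [Unitary.conjStarAlgAut_apply, Unitary.coe_star, star_star] at h
      exact h
  set N : Matrix (Fin n) (Fin n) ℂ := M * W with hNdef
  have hNN : Nᴴ * N = Matrix.diagonal (fun i => (d i : ℂ)) := by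
    rw [hNdef, conjTranspose_mul, ← hdiag]
    simp only [Matrix.mul_assoc]
  set g : Fin n → ℝ := fun i => Real.sqrt (d i) with hgdef
  have hg2 : ∀ i, g i * g i = d i := fun i => Real.mul_self_sqrt (hd i)
  have hcol0 : ∀ i, d i = 0 → ∀ j, N j i = 0 := by
    intro i hi j
    have h0 : (Nᴴ * N) i i = 0 := by rw [hNN]; simp [hi]
    rw [Matrix.mul_apply] at h0
    have hterm : ∀ k, (Nᴴ i k * N k i) = ((Complex.normSq (N k i) : ℝ) : ℂ) := by
      intro k
      rw [Matrix.conjTranspose_apply]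
      exact Complex.normSq_eq_conj_mul_self.symm
    rw [Finset.sum_congr rfl (fun k _ => hterm k)] at h0
    rw [← Complex.ofReal_sum] at h0
    have hre : ∑ k, Complex.normSq (N k i) = 0 := by exact_mod_cast h0
    have := (Finset.sum_eq_zero_iff_of_nonneg
      (fun k _ => Complex.normSq_nonneg (N k i))).mp hre j (Finset.mem_univ j)
    exact Complex.normSq_eq_zero.mp this
  set v : Fin n → EuclideanSpace ℂ (Fin n) :=
    fun i => ((g i : ℂ))⁻¹ • (WithLp.toLp 2 (fun j => N j i) : EuclideanSpace ℂ (Fin n)) with hvdef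
  set sset : Set (Fin n) := {i | d i ≠ 0} with hsset
  have hNinner : ∀ i j, (∑ k, (starRingEnd ℂ) (N k i) * N k j) = Matrix.diagonal (fun i => (d i : ℂ)) i j := by
    intro i j
    rw [← hNN, Matrix.mul_apply]
    apply Finset.sum_congr rfl
    intro k _
    rw [Matrix.conjTranspose_apply]
    rfl
  have horth : Orthonormal ℂ (sset.restrict v) := by
    rw [orthonormal_iff_ite]
    rintro ⟨i, hi⟩ ⟨j, hj⟩
    have hinner : (inner ℂ (v i) (v j) : ℂ) =
        (starRingEnd ℂ) ((g i : ℂ))⁻¹ * ((g j : ℂ))⁻¹ *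
          Matrix.diagonal (fun i => (d i : ℂ)) i j := by
      rw [hvdef]
      simp only [inner_smul_left, inner_smul_right]
      rw [PiLp.inner_apply]
      simp only [RCLike.inner_apply']
      rw [← hNinner i j]
      ring_nf
    show inner ℂ (v i) (v j) = _
    rw [hinner]
    by_cases hij : i = j
    · subst hij
      simp only [Matrix.diagonal_apply_eq, if_pos rfl]
      have hgne : (g i : ℂ) ≠ 0 := by
        simp only [ne_eq, Complex.ofReal_eq_zero]
        intro h0
        exact hi (by rw [← hg2 i, h0, mul_zero])
      rw [if_pos trivial, map_inv₀, Complex.conj_ofReal, ← mul_inv, ← Complex.ofReal_mul,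
        hg2 i]
      exact inv_mul_cancel₀ (by exact_mod_cast hi)
    · simp [Matrix.diagonal_apply_ne _ hij, hij, Subtype.ext_iff]
  obtain ⟨b, hb⟩ := horth.exists_orthonormalBasis_extension_of_card_eq
    (by simp [finrank_euclideanSpace])
  set V : Matrix (Fin n) (Fin n) ℂ := Matrix.of (fun j i => b i j) with hVdef
  have hVmem : V ∈ Matrix.unitaryGroup (Fin n) ℂ := by
    rw [Matrix.mem_unitaryGroup_iff']
    ext i j
    rw [Matrix.mul_apply, Matrix.one_apply]
    have := (orthonormal_iff_ite (𝕜 := ℂ)).mp b.orthonormal i j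
    rw [PiLp.inner_apply] at this
    simp only [RCLike.inner_apply'] at this
    rw [← this]
    apply Finset.sum_congr rfl
    intro k _
    rw [Matrix.star_apply, hVdef]
    rfl
  have hVV : Vᴴ * V = 1 := by
    simpa [Matrix.star_eq_conjTranspose] using (Matrix.mem_unitaryGroup_iff').mp hVmem
  have hVg : V * Matrix.diagonal (fun i => (g i : ℂ)) = N := by
    ext j i
    rw [Matrix.mul_diagonal]
    by_cases hdi : d i = 0
    · have : g i = 0 := by rw [hgdef]; simp [hdi]
      rw [hcol0 i hdi j, this]
      simp
    · have hbv : b i = v i := hb i hdi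
      have hgne : (g i : ℂ) ≠ 0 := by
        simp only [ne_eq, Complex.ofReal_eq_zero]
        intro h0
        exact hdi (by rw [← hg2 i, h0, mul_zero])
      have hVji : V j i = ((g i : ℂ))⁻¹ * N j i := by
        rw [hVdef]
        show b i j = _
        rw [hbv, hvdef]
        rfl
      rw [hVji]
      field_simp
  have hMeq : M = V * Matrix.diagonal (fun i => (g i : ℂ)) * Wᴴ := by
    rw [hVg, hNdef, Matrix.mul_assoc, hWW', Matrix.mul_one]
  refine ⟨W * Vᴴ, ?_, ?_⟩
  · exact (Matrix.unitaryGroup (Fin n) ℂ).mul_mem hWmem (Unitary.star_mem hVmem)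
  · have hPM : (W * Vᴴ) * M = W * Matrix.diagonal (fun i => (g i : ℂ)) * Wᴴ := by
      conv_lhs => rw [hMeq]
      calc (W * Vᴴ) * (V * Matrix.diagonal (fun i => (g i : ℂ)) * Wᴴ)
          = W * ((Vᴴ * V) * (Matrix.diagonal (fun i => (g i : ℂ)) * Wᴴ)) := by
            simp only [Matrix.mul_assoc]
        _ = W * Matrix.diagonal (fun i => (g i : ℂ)) * Wᴴ := by
            rw [hVV, Matrix.one_mul, Matrix.mul_assoc]
    rw [hPM]
    exact (Matrix.PosSemidef.diagonal (fun i =>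
      Complex.zero_le_real.mpr (Real.sqrt_nonneg _))).mul_mul_conjTranspose_same W

lemma re_trace_le_traceNorm (X : Matrix (Fin n) (Fin n) ℂ) :
    (X.trace).re ≤ traceNorm X ∧ ((X.trace).re = traceNorm X → X.PosSemidef) := by
  obtain ⟨P, hP, hK⟩ := exists_unitary_mul_posSemidef X
  set K := P * X with hKdef
  have hPP : Pᴴ * P = 1 := by
    simpa [Matrix.star_eq_conjTranspose] using (Matrix.mem_unitaryGroup_iff').mp hP
  have hXPK : X = Pᴴ * K := by
    rw [hKdef, ← Matrix.mul_assoc, hPP, Matrix.one_mul]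
  have hPu : Pᴴ ∈ Matrix.unitaryGroup (Fin n) ℂ := Unitary.star_mem hP
  have h1 := re_trace_unitary_mul_psd hPu hK
  have htK : traceNorm X = (K.trace).re := by
    rw [← traceNorm_unitary_mul hP, ← hKdef]
    exact traceNorm_posSemidef hK
  constructor
  · rw [htK]
    conv_lhs => rw [hXPK]
    exact h1.1
  · intro heq
    have heq' : ((Pᴴ * K).trace).re = (K.trace).re := by
      rw [← hXPK, heq, htK]
    have := h1.2 heq'
    rw [hXPK, this]
    exact hK

theorem traceNorm_add_eq_iff {n : ℕ} (A B : Matrix (Fin n) (Fin n) ℂ) :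
    traceNorm (A + B) = traceNorm A + traceNorm B ↔
      ∃ P : Matrix (Fin n) (Fin n) ℂ, P ∈ Matrix.unitaryGroup (Fin n) ℂ ∧
        (P * A).PosSemidef ∧ (P * B).PosSemidef := by
  constructor
  · intro h
    obtain ⟨P, hP, hK⟩ := exists_unitary_mul_posSemidef (A + B)
    refine ⟨P, hP, ?_, ?_⟩
    all_goals {
      have hsplit : P * (A + B) = P * A + P * B := Matrix.mul_add P A B
      have ht : traceNorm (A + B) = ((P * A).trace).re + ((P * B).trace).re := by
        rw [← traceNorm_unitary_mul hP, traceNorm_posSemidef hK, hsplit, Matrix.trace_add,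
          Complex.add_re]
      have ha := re_trace_le_traceNorm (P * A)
      have hb := re_trace_le_traceNorm (P * B)
      have hta : traceNorm (P * A) = traceNorm A := traceNorm_unitary_mul hP
      have htb : traceNorm (P * B) = traceNorm B := traceNorm_unitary_mul hP
      have ha1 := ha.1
      have hb1 := hb.1
      rw [hta] at ha1
      rw [htb] at hb1
      rw [h] at ht
      first
      | exact ha.2 (by rw [hta]; linarith)
      | exact hb.2 (by rw [htb]; linarith)
    }
  · rintro ⟨P, hP, hPA, hPB⟩
    rw [← traceNorm_unitary_mul (M := A + B) hP, Matrix.mul_add,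
      traceNorm_posSemidef (hPA.add hPB), Matrix.trace_add, Complex.add_re,
      ← traceNorm_posSemidef hPA, ← traceNorm_posSemidef hPB,
      traceNorm_unitary_mul hP, traceNorm_unitary_mul hP]
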